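/- Let Z be a random variable with values in [0,2], and let Z₋, Z₊ be independent random variables each with the same law as Z, such that almost surely Z ≥ max(Z₋, Z₊). Then Z is almost surely constant. -/

import Mathlib

open MeasureTheory ProbabilityTheory

/-- zero-one law step: if `Z₋, Z₊` are independent, have the same
law as `Z ∈ [0,2]`, and a.s. `Z ≥ max(Z₋, Z₊)`, then `Z` is a.s. constant. -/
theorem zero_one_dimension_step {Ω : Type} [MeasureSpace Ω]
    [IsProbabilityMeasure (ℙ : Measure Ω)]
    (Z Zm Zp : Ω → ℝ) (hZ : Measurable Z) (hZm : Measurable Zm) (hZp : Measurable Zp)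
    (hrange : ∀ᵐ ω ∂(ℙ : Measure Ω), Z ω ∈ Set.Icc (0:ℝ) 2)
    (hlawm : Measure.map Zm ℙ = Measure.map Z ℙ)
    (hlawp : Measure.map Zp ℙ = Measure.map Z ℙ)
    (hindep : IndepFun Zm Zp ℙ)
    (hmaj : ∀ᵐ ω ∂(ℙ : Measure Ω), max (Zm ω) (Zp ω) ≤ Z ω) :
    ∃ c : ℝ, ∀ᵐ ω ∂(ℙ : Measure Ω), Z ω = c := by
  -- range of Zm and Zp
  have hrangeM : ∀ᵐ ω ∂(ℙ : Measure Ω), Zm ω ∈ Set.Icc (0:ℝ) 2 := by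
    have h1 : ∀ᵐ x ∂(Measure.map Z (ℙ : Measure Ω)), x ∈ Set.Icc (0:ℝ) 2 :=
      (ae_map_iff hZ.aemeasurable measurableSet_Icc).2 hrange
    rw [← hlawm] at h1
    exact (ae_map_iff hZm.aemeasurable measurableSet_Icc).1 h1
  have hrangeP : ∀ᵐ ω ∂(ℙ : Measure Ω), Zp ω ∈ Set.Icc (0:ℝ) 2 := by
    have h1 : ∀ᵐ x ∂(Measure.map Z (ℙ : Measure Ω)), x ∈ Set.Icc (0:ℝ) 2 :=
      (ae_map_iff hZ.aemeasurable measurableSet_Icc).2 hrange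
    rw [← hlawp] at h1
    exact (ae_map_iff hZp.aemeasurable measurableSet_Icc).1 h1
  -- integrability
  have hbd : ∀ (f : Ω → ℝ), Measurable f →
      (∀ᵐ ω ∂(ℙ : Measure Ω), f ω ∈ Set.Icc (0:ℝ) 2) → Integrable f ℙ := by
    intro f hf hr
    refine (integrable_const (2:ℝ)).mono' hf.aestronglyMeasurable ?_
    filter_upwards [hr] with ω hω
    rw [Real.norm_eq_abs, abs_le]
    exact ⟨by linarith [hω.1], hω.2⟩
  have hintZ : Integrable Z ℙ := hbd Z hZ hrange
  have hintM : Integrable Zm ℙ := hbd Zm hZm hrangeM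
  have hintP : Integrable Zp ℙ := hbd Zp hZp hrangeP
  -- equal expectations
  have hid : ∀ (f : Ω → ℝ), Measurable f →
      ∫ x, x ∂(Measure.map f (ℙ : Measure Ω)) = ∫ ω, f ω ∂(ℙ : Measure Ω) := fun f hf =>
    integral_map hf.aemeasurable aestronglyMeasurable_id
  have hEm : ∫ ω, Zm ω ∂(ℙ : Measure Ω) = ∫ ω, Z ω ∂(ℙ : Measure Ω) := by
    rw [← hid Zm hZm, ← hid Z hZ, hlawm]
  have hEp : ∫ ω, Zp ω ∂(ℙ : Measure Ω) = ∫ ω, Z ω ∂(ℙ : Measure Ω) := by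
    rw [← hid Zp hZp, ← hid Z hZ, hlawp]
  -- Z = Zm a.e. and Z = Zp a.e.
  have haux : ∀ (W : Ω → ℝ), Integrable W ℙ →
      (∫ ω, W ω ∂(ℙ : Measure Ω) = ∫ ω, Z ω ∂(ℙ : Measure Ω)) →
      (∀ᵐ ω ∂(ℙ : Measure Ω), W ω ≤ Z ω) → Z =ᵐ[(ℙ : Measure Ω)] W := by
    intro W hintW hEW hle
    have hnonneg : 0 ≤ᵐ[(ℙ : Measure Ω)] fun ω => Z ω - W ω := by
      filter_upwards [hle] with ω hω; simpa using hω
    have hint : Integrable (fun ω => Z ω - W ω) ℙ := hintZ.sub hintW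
    have hzero : ∫ ω, (Z ω - W ω) ∂(ℙ : Measure Ω) = 0 := by
      rw [integral_sub hintZ hintW, hEW]; ring
    have := (integral_eq_zero_iff_of_nonneg_ae hnonneg hint).1 hzero
    filter_upwards [this] with ω hω
    have : Z ω - W ω = 0 := hω
    linarith
  have hZMeq : Z =ᵐ[(ℙ : Measure Ω)] Zm :=
    haux Zm hintM hEm (hmaj.mono fun ω h => le_trans (le_max_left _ _) h)
  have hZPeq : Z =ᵐ[(ℙ : Measure Ω)] Zp :=
    haux Zp hintP hEp (hmaj.mono fun ω h => le_trans (le_max_right _ _) h)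
  have hMPeq : Zp =ᵐ[(ℙ : Measure Ω)] Zm := hZPeq.symm.trans hZMeq
  -- Zm is independent of itself
  have hindep' : IndepFun Zm Zm (ℙ : Measure Ω) :=
    ProbabilityTheory.IndepFun.congr hindep (Filter.EventuallyEq.refl _ _) hMPeq
  set c : ℝ := ∫ ω, Zm ω ∂(ℙ : Measure Ω) with hc
  -- E[Zm * Zm] = c ^ 2
  have hmul : ∫ ω, Zm ω * Zm ω ∂(ℙ : Measure Ω) = c * c :=
    ProbabilityTheory.IndepFun.integral_fun_mul_eq_mul_integral hindep' hintM.1 hintM.1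
  have hintMM : Integrable (fun ω => Zm ω * Zm ω) ℙ := by
    refine (integrable_const (4:ℝ)).mono' (hZm.mul hZm).aestronglyMeasurable ?_
    filter_upwards [hrangeM] with ω hω
    rw [Real.norm_eq_abs, abs_mul]
    have h1 : |Zm ω| ≤ 2 := abs_le.2 ⟨by linarith [hω.1], hω.2⟩
    nlinarith [abs_nonneg (Zm ω)]
  -- (Zm - c)^2 has zero integral
  have hg : ∀ ω, (Zm ω - c) ^ 2 = Zm ω * Zm ω - (2 * c) * Zm ω + c ^ 2 := by
    intro ω; ring
  have hintg : Integrable (fun ω => (Zm ω - c) ^ 2) ℙ := by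
    simp only [hg]
    exact (hintMM.sub (hintM.const_mul (2 * c))).add (integrable_const _)
  have hA : Integrable (fun ω => Zm ω * Zm ω - 2 * c * Zm ω) ℙ :=
    hintMM.sub (hintM.const_mul (2 * c))
  have hB : Integrable (fun ω => 2 * c * Zm ω) ℙ := hintM.const_mul (2 * c)
  have hzero : ∫ ω, (Zm ω - c) ^ 2 ∂(ℙ : Measure Ω) = 0 := by
    simp only [hg]
    rw [integral_add hA (integrable_const _), integral_sub hintMM hB,
        integral_const_mul, hmul, integral_const, probReal_univ]
    simp [← hc]; ring
  have hnn : 0 ≤ᵐ[(ℙ : Measure Ω)] fun ω => (Zm ω - c) ^ 2 :=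
    Filter.Eventually.of_forall fun ω => sq_nonneg _
  have := (integral_eq_zero_iff_of_nonneg_ae hnn hintg).1 hzero
  refine ⟨c, ?_⟩
  filter_upwards [this, hZMeq] with ω h1 h2
  have : (Zm ω - c) ^ 2 = 0 := h1
  have : Zm ω = c := by nlinarith [sq_nonneg (Zm ω - c)]
  rw [h2, this]
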